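/- Under the hypotheses of the optimality theorem for the relaxation (R) — namely, U* ⊆ {1,…,M} with |U*| = m ≥ 1 and V* ⊆ {1,…,N} with |V*| = n ≥ 1 with characteristic vectors ū, v̄, X* = ū v̄ᵀ feasible for (R), and there exist W ∈ R^{M×N}, λ ∈ R^{M×N}, μ with W v̄ = 0, ūᵀ W = 0, and ū v̄ᵀ/√(mn) + W = μ e eᵀ + Σ_{(i,j)∈Ẽ} λ_{ij} e_i e_jᵀ — if in addition ‖W‖ < 1 and μ > 0, then X* is the unique optimal solution of (R): every feasible X ≠ X* satisfies ‖X‖_* > ‖X*‖_*. -/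

import Mathlib

open Matrix

/-- The spectral norm (largest singular value) of a real matrix. -/
noncomputable def matSpectralNorm {m n : Type*} [Fintype m] [Fintype n] [DecidableEq n]
    (A : Matrix m n ℝ) : ℝ :=
  ‖LinearMap.toContinuousLinearMap (Matrix.toEuclideanLin A)‖

/-- The nuclear norm (sum of singular values) of a real matrix. -/
noncomputable def nuclearNorm {m n : Type*} [Fintype m] [Fintype n] [DecidableEq n]
    (A : Matrix m n ℝ) : ℝ :=
  ∑ j, Real.sqrt ((show (Aᵀ * A).IsHermitian by simpa using Matrix.isHermitian_conjTranspose_mul_self A).eigenvalues j)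

/-- The characteristic vector of a finite set of indices. -/
def charVec {ι : Type*} [DecidableEq ι] (S : Finset ι) : ι → ℝ :=
  fun i => if i ∈ S then 1 else 0

/-- Feasibility for the relaxation (R): `∑_{i,j} X_{ij} ≥ mn` and `X_{ij} = 0` for all
`(i,j)` in the complement of `E`. -/
def FeasR {M N : ℕ} (E : Set (Fin M × Fin N)) (m n : ℕ)
    (X : Matrix (Fin M) (Fin N) ℝ) : Prop :=
  (m : ℝ) * n ≤ (∑ i, ∑ j, X i j) ∧ ∀ i j, (i, j) ∉ E → X i j = 0

/-! ### Auxiliary lemmas -/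

set_option maxHeartbeats 1000000

lemma Matrix.isHermitian_transpose_mul_self {m n : Type*} [Fintype m] (A : Matrix m n ℝ) :
    (Aᵀ * A).IsHermitian := by
  simpa using Matrix.isHermitian_conjTranspose_mul_self A

/-- Euclidean norm of a plain vector. -/
noncomputable def env {n : Type*} [Fintype n] (x : n → ℝ) : ℝ := Real.sqrt (x ⬝ᵥ x)

lemma dot_self_nonneg {n : Type*} [Fintype n] (x : n → ℝ) : 0 ≤ x ⬝ᵥ x := by
  apply Finset.sum_nonneg; intro i _; exact mul_self_nonneg _

lemma env_nonneg {n : Type*} [Fintype n] (x : n → ℝ) : 0 ≤ env x := Real.sqrt_nonneg _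

lemma sq_env {n : Type*} [Fintype n] (x : n → ℝ) : env x ^ 2 = x ⬝ᵥ x := by
  rw [env, Real.sq_sqrt (dot_self_nonneg x)]

lemma dot_self_eq_zero {n : Type*} [Fintype n] {x : n → ℝ} (h : x ⬝ᵥ x = 0) : x = 0 := by
  funext i
  have := (Finset.sum_eq_zero_iff_of_nonneg (fun i _ => mul_self_nonneg (x i))).1 h i
    (Finset.mem_univ i)
  have := mul_self_eq_zero.1 this
  simpa using this

lemma env_eq_norm {n : Type*} [Fintype n] (x : n → ℝ) :
    env x = ‖(WithLp.equiv 2 (n → ℝ)).symm x‖ := by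
  rw [EuclideanSpace.norm_eq, env, dotProduct]
  congr 1
  apply Finset.sum_congr rfl
  intro i _
  simp [Real.norm_eq_abs, sq, abs_mul_abs_self]

lemma dot_eq_inner {n : Type*} [Fintype n] (x y : n → ℝ) :
    x ⬝ᵥ y = inner ℝ ((WithLp.equiv 2 (n → ℝ)).symm x) ((WithLp.equiv 2 (n → ℝ)).symm y) := by
  simp [PiLp.inner_apply, RCLike.inner_apply, dotProduct, mul_comm]

lemma dot_le_env_mul_env {n : Type*} [Fintype n] (x y : n → ℝ) :
    x ⬝ᵥ y ≤ env x * env y := by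
  rw [dot_eq_inner, env_eq_norm, env_eq_norm]
  exact real_inner_le_norm _ _

lemma matSpectralNorm_nonneg {m n : Type*} [Fintype m] [Fintype n] [DecidableEq n]
    (A : Matrix m n ℝ) : 0 ≤ matSpectralNorm A := norm_nonneg _

lemma env_mulVec_le {m n : Type*} [Fintype m] [Fintype n] [DecidableEq n]
    (A : Matrix m n ℝ) (x : n → ℝ) :
    env (A *ᵥ x) ≤ matSpectralNorm A * env x := by
  rw [env_eq_norm, env_eq_norm]
  have := (LinearMap.toContinuousLinearMap (Matrix.toEuclideanLin A)).le_opNorm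
    ((WithLp.equiv 2 (n → ℝ)).symm x)
  simpa [matSpectralNorm, WithLp.equiv_symm_apply, Matrix.toEuclideanLin_apply_piLp_toLp] using this

lemma eig_package {N : ℕ} (A : Matrix (Fin N) (Fin N) ℝ) (hA : A.IsHermitian) :
    ∃ v : Fin N → (Fin N → ℝ),
      (∀ j, A *ᵥ v j = hA.eigenvalues j • v j) ∧
      (∀ j j', v j ⬝ᵥ v j' = if j = j' then 1 else 0) ∧
      (∀ k l, (∑ j, v j k * v j l) = if k = l then 1 else 0) := by
  refine ⟨fun j => ⇑(hA.eigenvectorBasis j), fun j => hA.mulVec_eigenvectorBasis j, ?_, ?_⟩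
  · intro j j'
    have h1 := hA.eigenvectorBasis.orthonormal
    rw [orthonormal_iff_ite] at h1
    have := h1 j j'
    simpa [PiLp.inner_apply, RCLike.inner_apply, dotProduct, mul_comm] using this
  · intro k l
    set B : Matrix (Fin N) (Fin N) ℝ := Matrix.of (fun k j => hA.eigenvectorBasis j k) with hB
    have hBtB : Bᵀ * B = 1 := by
      ext j j'
      have h1 := hA.eigenvectorBasis.orthonormal
      rw [orthonormal_iff_ite] at h1
      have := h1 j j'
      simp only [Matrix.mul_apply, Matrix.transpose_apply, Matrix.one_apply, hB, Matrix.of_apply]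
      simpa [PiLp.inner_apply, RCLike.inner_apply, mul_comm] using this
    have hBBt : B * Bᵀ = 1 := mul_eq_one_comm.1 hBtB
    have h2 : (B * Bᵀ) k l = (1 : Matrix (Fin N) (Fin N) ℝ) k l := by rw [hBBt]
    simpa [Matrix.mul_apply, Matrix.transpose_apply, Matrix.one_apply, hB] using h2

lemma trace_identity {M N : ℕ} (D X : Matrix (Fin M) (Fin N) ℝ)
    (v : Fin N → (Fin N → ℝ))
    (hc : ∀ k l, (∑ j, v j k * v j l) = if k = l then (1:ℝ) else 0) :
    ∑ j, (D *ᵥ v j) ⬝ᵥ (X *ᵥ v j) = ∑ i, ∑ k, D i k * X i k := by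
  have h1 : ∀ j, (D *ᵥ v j) ⬝ᵥ (X *ᵥ v j)
      = ∑ i, ∑ k, ∑ l, D i k * X i l * (v j k * v j l) := by
    intro j
    simp only [dotProduct, mulVec]
    apply Finset.sum_congr rfl
    intro i _
    rw [Finset.sum_mul_sum]
    apply Finset.sum_congr rfl; intro k _
    apply Finset.sum_congr rfl; intro l _
    ring
  calc ∑ j, (D *ᵥ v j) ⬝ᵥ (X *ᵥ v j)
      = ∑ j, ∑ i, ∑ k, ∑ l, D i k * X i l * (v j k * v j l) :=
        Finset.sum_congr rfl (fun j _ => h1 j)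
    _ = ∑ i, ∑ k, ∑ l, D i k * X i l * (∑ j, v j k * v j l) := by
        rw [Finset.sum_comm]
        apply Finset.sum_congr rfl; intro i _
        rw [Finset.sum_comm]
        apply Finset.sum_congr rfl; intro k _
        rw [Finset.sum_comm]
        apply Finset.sum_congr rfl; intro l _
        rw [Finset.mul_sum]
    _ = ∑ i, ∑ k, D i k * X i k := by
        apply Finset.sum_congr rfl; intro i _
        apply Finset.sum_congr rfl; intro k _
        rw [Finset.sum_congr rfl (fun l _ => by rw [hc k l])]
        simp [Finset.sum_ite_eq]

lemma reconstruction {M N : ℕ} (X : Matrix (Fin M) (Fin N) ℝ)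
    (v : Fin N → (Fin N → ℝ))
    (hc : ∀ k l, (∑ j, v j k * v j l) = if k = l then (1:ℝ) else 0)
    (i : Fin M) (k : Fin N) :
    X i k = ∑ j, (X *ᵥ v j) i * v j k := by
  have h : ∑ j, (X *ᵥ v j) i * v j k = ∑ l, X i l * (∑ j, v j l * v j k) := by
    have h1 : ∀ j, (X *ᵥ v j) i * v j k = ∑ l, X i l * (v j l * v j k) := by
      intro j
      simp only [mulVec, dotProduct, Finset.sum_mul]
      apply Finset.sum_congr rfl; intro l _; ring
    rw [Finset.sum_congr rfl (fun j _ => h1 j), Finset.sum_comm]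
    apply Finset.sum_congr rfl; intro l _
    rw [Finset.mul_sum]
  rw [h, Finset.sum_congr rfl (fun l _ => by rw [hc l k])]
  simp

lemma parseval {N : ℕ} (v : Fin N → (Fin N → ℝ))
    (hc : ∀ k l, (∑ j, v j k * v j l) = if k = l then (1:ℝ) else 0)
    (y : Fin N → ℝ) : ∑ j, (y ⬝ᵥ v j)^2 = y ⬝ᵥ y := by
  have h1 : ∀ j, (y ⬝ᵥ v j)^2 = ∑ k, ∑ l, y k * y l * (v j k * v j l) := by
    intro j
    rw [sq, dotProduct, Finset.sum_mul_sum]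
    apply Finset.sum_congr rfl; intro k _
    apply Finset.sum_congr rfl; intro l _; ring
  calc ∑ j, (y ⬝ᵥ v j)^2 = ∑ j, ∑ k, ∑ l, y k * y l * (v j k * v j l) :=
        Finset.sum_congr rfl (fun j _ => h1 j)
    _ = ∑ k, ∑ l, y k * y l * (∑ j, v j k * v j l) := by
        rw [Finset.sum_comm]
        apply Finset.sum_congr rfl; intro k _
        rw [Finset.sum_comm]
        apply Finset.sum_congr rfl; intro l _
        rw [Finset.mul_sum]
    _ = y ⬝ᵥ y := by
        apply Finset.sum_congr rfl; intro k _
        rw [Finset.sum_congr rfl (fun l _ => by rw [hc k l])]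
        simp [dotProduct, sq]

lemma charVec_dot {ι : Type*} [DecidableEq ι] [Fintype ι] (S : Finset ι) :
    charVec S ⬝ᵥ charVec S = (S.card : ℝ) := by
  simp [charVec, dotProduct, ite_and]

lemma charVec_sum {ι : Type*} [DecidableEq ι] [Fintype ι] (S : Finset ι) :
    ∑ i, charVec S i = (S.card : ℝ) := by
  simp [charVec]

lemma vecMulVec_mulVec' {M N : ℕ} (u : Fin M → ℝ) (v x : Fin N → ℝ) :
    vecMulVec u v *ᵥ x = (v ⬝ᵥ x) • u := by
  funext i
  simp only [mulVec, vecMulVec_apply, dotProduct, Pi.smul_apply, smul_eq_mul, Finset.sum_mul]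
  apply Finset.sum_congr rfl; intro j _; ring

lemma transpose_vecMulVec' {M N : ℕ} (u : Fin M → ℝ) (v : Fin N → ℝ) :
    (vecMulVec u v)ᵀ = vecMulVec v u := by
  ext i j; simp [vecMulVec_apply, mul_comm]

lemma nuclear_pack {M N : ℕ} (X : Matrix (Fin M) (Fin N) ℝ) :
    ∃ v : Fin N → (Fin N → ℝ),
      (∀ j j', v j ⬝ᵥ v j' = if j = j' then (1:ℝ) else 0) ∧
      (∀ k l, (∑ j, v j k * v j l) = if k = l then (1:ℝ) else 0) ∧
      nuclearNorm X = ∑ j, env (X *ᵥ v j) ∧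
      (∀ j, (Xᵀ * X) *ᵥ v j = ((X *ᵥ v j) ⬝ᵥ (X *ᵥ v j)) • v j) := by
  obtain ⟨v, hv1, hv2, hv3⟩ := eig_package (Xᵀ * X) (isHermitian_transpose_mul_self X)
  have hlam : ∀ j, (X *ᵥ v j) ⬝ᵥ (X *ᵥ v j)
      = (isHermitian_transpose_mul_self X).eigenvalues j := by
    intro j
    have h1 : (X *ᵥ v j) ⬝ᵥ (X *ᵥ v j) = v j ⬝ᵥ ((Xᵀ * X) *ᵥ v j) := by
      rw [← mulVec_mulVec]
      conv_rhs => rw [dotProduct_mulVec, vecMul_transpose]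
    rw [h1, hv1 j, dotProduct_smul, hv2 j j, smul_eq_mul, if_pos rfl, mul_one]
  refine ⟨v, hv2, hv3, ?_, ?_⟩
  · rw [nuclearNorm]
    apply Finset.sum_congr rfl
    intro j _
    rw [env, hlam j]
  · intro j
    rw [hlam j]
    exact hv1 j

lemma cert_bound {M N : ℕ} (W : Matrix (Fin M) (Fin N) ℝ) (u : Fin M → ℝ) (v : Fin N → ℝ)
    (s nR mR : ℝ) (hs : 0 < s) (hs2 : s^2 = mR * nR) (hn : 0 < nR)
    (huu : u ⬝ᵥ u = mR) (hvv : v ⬝ᵥ v = nR)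
    (hWv : W *ᵥ v = 0) (hWu : u ᵥ* W = 0) (hW : matSpectralNorm W < 1)
    (x : Fin N → ℝ) (hx : x ⬝ᵥ x = 1) :
    env ((s⁻¹ • vecMulVec u v + W) *ᵥ x) ≤ 1 ∧
    (1 ≤ env ((s⁻¹ • vecMulVec u v + W) *ᵥ x) →
      ∃ c : ℝ, x = c • v ∧ c^2 * nR = 1 ∧
        (s⁻¹ • vecMulVec u v + W) *ᵥ x = (c * nR / s) • u) := by
  set a := v ⬝ᵥ x with ha
  set w : Fin N → ℝ := x - (a / nR) • v with hw
  have hxw : x = w + (a / nR) • v := by rw [hw]; abel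
  have hww : w ⬝ᵥ w = 1 - a^2 / nR := by
    rw [hw]
    simp only [dotProduct_sub, sub_dotProduct, dotProduct_smul, smul_dotProduct,
      smul_eq_mul, hx, hvv]
    rw [dotProduct_comm x v, ← ha]
    field_simp
    ring
  have ht1 : a^2 / nR ≤ 1 := by nlinarith [dot_self_nonneg w]
  have hWx : W *ᵥ x = W *ᵥ w := by
    rw [hxw, mulVec_add, mulVec_smul, hWv]; simp
  have hDx : (s⁻¹ • vecMulVec u v + W) *ᵥ x = (s⁻¹ * a) • u + W *ᵥ w := by
    rw [add_mulVec, smul_mulVec, vecMulVec_mulVec', hWx, ← ha, smul_smul]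
  have huWw : u ⬝ᵥ (W *ᵥ w) = 0 := by rw [dotProduct_mulVec, hWu, zero_dotProduct]
  have hQ : ((s⁻¹ * a) • u + W *ᵥ w) ⬝ᵥ ((s⁻¹ * a) • u + W *ᵥ w)
      = a^2 / nR + (W *ᵥ w) ⬝ᵥ (W *ᵥ w) := by
    simp only [add_dotProduct, dotProduct_add, smul_dotProduct, dotProduct_smul,
      smul_eq_mul, huu, huWw, dotProduct_comm (W *ᵥ w) u]
    have hs' : s ≠ 0 := ne_of_gt hs
    have hn' : nR ≠ 0 := ne_of_gt hn
    field_simp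
    linear_combination (-(a^2)) * hs2
  have hWwb : (W *ᵥ w) ⬝ᵥ (W *ᵥ w) ≤ matSpectralNorm W^2 * (1 - a^2 / nR) := by
    have h1 := env_mulVec_le W w
    have h2 : env (W *ᵥ w) ^ 2 ≤ (matSpectralNorm W * env w)^2 := by
      have := env_nonneg (W *ᵥ w)
      nlinarith [env_nonneg w, matSpectralNorm_nonneg W]
    rw [sq_env] at h2
    rw [mul_pow, sq_env, hww] at h2
    exact h2
  have henv2 : env ((s⁻¹ • vecMulVec u v + W) *ᵥ x) ^ 2
      = a^2 / nR + (W *ᵥ w) ⬝ᵥ (W *ᵥ w) := by rw [hDx, sq_env, hQ]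
  have hρ := matSpectralNorm_nonneg W
  have hρ2 : matSpectralNorm W ^ 2 ≤ 1 := by nlinarith
  have hkey : matSpectralNorm W ^ 2 * (1 - a^2 / nR) ≤ 1 - a^2 / nR :=
    mul_le_of_le_one_left (by linarith) hρ2
  constructor
  · have h1 : env ((s⁻¹ • vecMulVec u v + W) *ᵥ x) ^ 2 ≤ 1 := by
      rw [henv2]; linarith
    nlinarith [env_nonneg ((s⁻¹ • vecMulVec u v + W) *ᵥ x)]
  · intro hge
    have h1 : 1 ≤ env ((s⁻¹ • vecMulVec u v + W) *ᵥ x) ^ 2 := by nlinarith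
    rw [henv2] at h1
    have ht : a^2 / nR = 1 := by
      by_contra hne
      have hlt : a^2 / nR < 1 := lt_of_le_of_ne ht1 hne
      have hρ2' : matSpectralNorm W ^ 2 < 1 := by nlinarith
      have : matSpectralNorm W ^ 2 * (1 - a^2 / nR) < 1 * (1 - a^2 / nR) :=
        mul_lt_mul_of_pos_right hρ2' (by linarith)
      linarith
    have hww0 : w ⬝ᵥ w = 0 := by rw [hww, ht]; ring
    have hw0 : w = 0 := dot_self_eq_zero hww0
    refine ⟨a / nR, ?_, ?_, ?_⟩
    · rw [hxw, hw0]; simp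
    · have ha2 : a^2 = nR := by
        rw [div_eq_one_iff_eq (ne_of_gt hn)] at ht
        exact ht
      rw [div_pow, ha2]
      field_simp
    · rw [hDx, hw0, mulVec_zero, add_zero]
      congr 1
      field_simp
/-- under the hypotheses of the optimality theorem for the relaxation (R),
if moreover `‖W‖ < 1` and `μ > 0`, then `X* = ū v̄ᵀ` is the unique optimal solution of (R):
every feasible `X ≠ X*` satisfies `‖X‖_* > ‖X*‖_*`. -/
theorem relaxation_uniqueness
    (M N m n : ℕ) (hm : 1 ≤ m) (hn : 1 ≤ n)
    (E : Set (Fin M × Fin N))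
    (Ustar : Finset (Fin M)) (Vstar : Finset (Fin N))
    (hUm : Ustar.card = m) (hVn : Vstar.card = n)
    (hfeas : FeasR E m n (vecMulVec (charVec Ustar) (charVec Vstar)))
    (W Λ : Matrix (Fin M) (Fin N) ℝ) (μ : ℝ)
    (hWv : W *ᵥ charVec Vstar = 0)
    (hWu : charVec Ustar ᵥ* W = 0)
    (hΛ : ∀ i j, (i, j) ∈ E → Λ i j = 0)
    (heq : (Real.sqrt ((m : ℝ) * n))⁻¹ • vecMulVec (charVec Ustar) (charVec Vstar) + W
         = μ • Matrix.of (fun _ _ => (1 : ℝ)) + Λ)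
    (hWlt : matSpectralNorm W < 1) (hμpos : 0 < μ) :
    ∀ X : Matrix (Fin M) (Fin N) ℝ, FeasR E m n X →
      X ≠ vecMulVec (charVec Ustar) (charVec Vstar) →
      nuclearNorm X > nuclearNorm (vecMulVec (charVec Ustar) (charVec Vstar)) := by
  intro X hX hne
  set u : Fin M → ℝ := charVec Ustar with hu
  set vV : Fin N → ℝ := charVec Vstar with hvV
  set Xs : Matrix (Fin M) (Fin N) ℝ := vecMulVec u vV with hXs
  have hmR : (0:ℝ) < m := by exact_mod_cast hm
  have hnR : (0:ℝ) < n := by exact_mod_cast hn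
  have hmn : (0:ℝ) < (m:ℝ) * n := mul_pos hmR hnR
  set s : ℝ := Real.sqrt ((m:ℝ) * n) with hsdef
  have hs : 0 < s := Real.sqrt_pos.2 hmn
  have hs2 : s^2 = (m:ℝ)*n := Real.sq_sqrt hmn.le
  have huu : u ⬝ᵥ u = (m:ℝ) := by rw [hu, charVec_dot, hUm]
  have hvv : vV ⬝ᵥ vV = (n:ℝ) := by rw [hvV, charVec_dot, hVn]
  have hu1 : ∀ i ∈ Ustar, u i = 1 := fun i hi => by simp [hu, charVec, hi]
  have hv1' : ∀ k ∈ Vstar, vV k = 1 := fun k hk => by simp [hvV, charVec, hk]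
  -- entrywise form of the dual certificate equation
  have hentry : ∀ i k, s⁻¹ * (u i * vV k) + W i k = μ + Λ i k := by
    intro i k
    have h := congrFun (congrFun heq i) k
    simpa [Matrix.add_apply, Matrix.smul_apply, vecMulVec_apply, smul_eq_mul,
      Matrix.of_apply, mul_one, hXs] using h
  -- Λ vanishes on Ustar × Vstar
  have hΛUV : ∀ i ∈ Ustar, ∀ k ∈ Vstar, Λ i k = 0 := by
    intro i hi k hk
    apply hΛ
    by_contra hE
    have h0 := hfeas.2 i k hE
    rw [hXs] at h0
    rw [vecMulVec_apply, hu1 i hi, hv1' k hk] at h0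
    norm_num at h0
  -- row sums of W over Vstar vanish
  have hWrow : ∀ i, ∑ k ∈ Vstar, W i k = 0 := by
    intro i
    have h : ∑ k, W i k * vV k = 0 := by
      simpa [mulVec, dotProduct] using congrFun hWv i
    rw [← h]
    calc ∑ k ∈ Vstar, W i k = ∑ k ∈ Vstar, W i k * vV k :=
          Finset.sum_congr rfl (fun k hk => by rw [hv1' k hk, mul_one])
      _ = ∑ k, W i k * vV k :=
          Finset.sum_subset (Finset.subset_univ _)
            (fun k _ hk => by simp [hvV, charVec, hk])
  -- the value of μ
  have hμval : μ = s⁻¹ := by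
    have hL : ∑ i ∈ Ustar, ∑ k ∈ Vstar, (s⁻¹ * (u i * vV k) + W i k)
        = ∑ i ∈ Ustar, ∑ k ∈ Vstar, (μ + Λ i k) :=
      Finset.sum_congr rfl (fun i _ => Finset.sum_congr rfl (fun k _ => hentry i k))
    have hL1 : ∀ i ∈ Ustar, ∑ k ∈ Vstar, (s⁻¹ * (u i * vV k) + W i k) = (n:ℝ) * s⁻¹ := by
      intro i hi
      rw [Finset.sum_add_distrib, hWrow i, add_zero,
        Finset.sum_congr rfl (fun k hk => by rw [hu1 i hi, hv1' k hk, mul_one, mul_one]),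
        Finset.sum_const, hVn, nsmul_eq_mul]
    have hL2 : ∀ i ∈ Ustar, ∑ k ∈ Vstar, (μ + Λ i k) = (n:ℝ) * μ := by
      intro i hi
      rw [Finset.sum_add_distrib,
        Finset.sum_congr rfl (fun k hk => hΛUV i hi k hk), Finset.sum_const,
        Finset.sum_const, hVn, nsmul_eq_mul]
      simp
    rw [Finset.sum_congr rfl hL1, Finset.sum_congr rfl hL2, Finset.sum_const,
      Finset.sum_const, hUm, nsmul_eq_mul, nsmul_eq_mul] at hL
    have hancel : (n:ℝ) * s⁻¹ = (n:ℝ) * μ :=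
      mul_left_cancel₀ (ne_of_gt hmR) hL
    have := mul_left_cancel₀ (ne_of_gt hnR) hancel
    exact this.symm
  have hμmn : μ * ((m:ℝ)*n) = s := by
    rw [hμval, ← hs2]
    field_simp
  -- the dual certificate matrix
  set D : Matrix (Fin M) (Fin N) ℝ := s⁻¹ • Xs + W with hD
  have hDentry : ∀ i k, D i k = μ + Λ i k := by
    intro i k
    rw [hD]
    have : (s⁻¹ • Xs + W) i k = s⁻¹ * (u i * vV k) + W i k := by
      simp [Matrix.add_apply, Matrix.smul_apply, hXs, vecMulVec_apply, smul_eq_mul]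
    rw [this, hentry]
  obtain ⟨v, hv2, hv3, hnuc, hveig⟩ := nuclear_pack X
  have hunit : ∀ j, v j ⬝ᵥ v j = 1 := by
    intro j; have := hv2 j j; rwa [if_pos rfl] at this
  have hcert : ∀ x : Fin N → ℝ, x ⬝ᵥ x = 1 →
      env (D *ᵥ x) ≤ 1 ∧
      (1 ≤ env (D *ᵥ x) → ∃ c : ℝ, x = c • vV ∧ c^2 * (n:ℝ) = 1 ∧
        D *ᵥ x = (c * (n:ℝ) / s) • u) := by
    intro x hx
    exact cert_bound W u vV s (n:ℝ) (m:ℝ) hs hs2 hnR huu hvv hWv hWu hWlt x hx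
  have hTle : ∀ j, (D *ᵥ v j) ⬝ᵥ (X *ᵥ v j) ≤ env (X *ᵥ v j) := by
    intro j
    have h1 := dot_le_env_mul_env (D *ᵥ v j) (X *ᵥ v j)
    have h2 : env (D *ᵥ v j) ≤ 1 := (hcert (v j) (hunit j)).1
    calc (D *ᵥ v j) ⬝ᵥ (X *ᵥ v j) ≤ env (D *ᵥ v j) * env (X *ᵥ v j) := h1
      _ ≤ 1 * env (X *ᵥ v j) := mul_le_mul_of_nonneg_right h2 (env_nonneg _)
      _ = env (X *ᵥ v j) := one_mul _
  have hSumT : ∑ j, (D *ᵥ v j) ⬝ᵥ (X *ᵥ v j) = μ * (∑ i, ∑ k, X i k) := by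
    rw [trace_identity D X v hv3]
    have hterm : ∀ i k, D i k * X i k = μ * X i k := by
      intro i k
      rw [hDentry i k, add_mul]
      have : Λ i k * X i k = 0 := by
        by_cases hE : (i,k) ∈ E
        · rw [hΛ i k hE, zero_mul]
        · rw [hX.2 i k hE, mul_zero]
      rw [this, add_zero]
    rw [Finset.sum_congr rfl
      (fun i _ => Finset.sum_congr rfl (fun k _ => hterm i k))]
    rw [Finset.mul_sum]
    exact Finset.sum_congr rfl (fun i _ => (Finset.mul_sum _ _ _).symm)
  have hsle : s ≤ μ * (∑ i, ∑ k, X i k) := by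
    calc s = μ * ((m:ℝ)*n) := hμmn.symm
      _ ≤ μ * (∑ i, ∑ k, X i k) := mul_le_mul_of_nonneg_left hX.1 (le_of_lt hμpos)
  have hnucge : s ≤ nuclearNorm X := by
    rw [hnuc]
    calc s ≤ ∑ j, (D *ᵥ v j) ⬝ᵥ (X *ᵥ v j) := by rw [hSumT]; exact hsle
      _ ≤ ∑ j, env (X *ᵥ v j) := Finset.sum_le_sum (fun j _ => hTle j)
  -- upper bound for the nuclear norm of Xs
  have hnucXs : nuclearNorm Xs ≤ s := by
    obtain ⟨v', hv2', hv3', hnuc', hveig'⟩ := nuclear_pack Xs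
    have hXsv : ∀ j, Xs *ᵥ v' j = (vV ⬝ᵥ v' j) • u := fun j => vecMulVec_mulVec' u vV (v' j)
    have hdot : ∀ j, (Xs *ᵥ v' j) ⬝ᵥ (Xs *ᵥ v' j) = (m:ℝ) * (vV ⬝ᵥ v' j)^2 := by
      intro j
      rw [hXsv j]
      simp only [smul_dotProduct, dotProduct_smul, smul_eq_mul, huu]
      ring
    by_cases hall : ∀ j, vV ⬝ᵥ v' j = 0
    · rw [hnuc']
      have hz : ∀ j, env (Xs *ᵥ v' j) = 0 := by
        intro j
        rw [hXsv j, hall j, zero_smul, env, zero_dotProduct, Real.sqrt_zero]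
      rw [Finset.sum_congr rfl (fun j _ => hz j), Finset.sum_const, smul_zero]
      exact hs.le
    · push_neg at hall; obtain ⟨j₀, hj₀⟩ := hall
      have hpar : ∀ jj, ((m:ℝ) * (vV ⬝ᵥ v' jj)^2) • v' jj = ((m:ℝ) * (vV ⬝ᵥ v' jj)) • vV := by
        intro jj
        have h1 := hveig' jj
        rw [hdot jj] at h1
        have h2 : (Xsᵀ * Xs) *ᵥ v' jj = ((m:ℝ) * (vV ⬝ᵥ v' jj)) • vV := by
          rw [← mulVec_mulVec, hXsv jj, mulVec_smul]
          conv_lhs => rw [hXs, transpose_vecMulVec', vecMulVec_mulVec', huu]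
          rw [smul_smul, mul_comm]
        rw [h2] at h1
        exact h1.symm
      have huniq : ∀ j, j ≠ j₀ → vV ⬝ᵥ v' j = 0 := by
        intro j hjne
        by_contra hj
        have h1 := hpar j
        have h2 := hpar j₀
        have horto : v' j ⬝ᵥ v' j₀ = 0 := by
          have := hv2' j j₀; rwa [if_neg hjne] at this
        have hd : (((m:ℝ) * (vV ⬝ᵥ v' j)^2) • v' j) ⬝ᵥ (((m:ℝ) * (vV ⬝ᵥ v' j₀)^2) • v' j₀)
            = (((m:ℝ) * (vV ⬝ᵥ v' j)) • vV) ⬝ᵥ (((m:ℝ) * (vV ⬝ᵥ v' j₀)) • vV) := by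
          rw [h1, h2]
        rw [smul_dotProduct, dotProduct_smul, smul_dotProduct, dotProduct_smul, horto, hvv]
          at hd
        simp only [smul_eq_mul, mul_zero] at hd
        have hne1 : (m:ℝ) * (vV ⬝ᵥ v' j) * ((m:ℝ) * (vV ⬝ᵥ v' j₀) * (n:ℝ)) ≠ 0 := by
          apply mul_ne_zero (mul_ne_zero (ne_of_gt hmR) hj)
          exact mul_ne_zero (mul_ne_zero (ne_of_gt hmR) hj₀) (ne_of_gt hnR)
        exact hne1 hd.symm
      have hsingle : ∑ j, env (Xs *ᵥ v' j) = env (Xs *ᵥ v' j₀) := by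
        apply Finset.sum_eq_single j₀
        · intro j _ hjne
          rw [hXsv j, huniq j hjne, zero_smul, env, zero_dotProduct, Real.sqrt_zero]
        · intro h; exact absurd (Finset.mem_univ j₀) h
      rw [hnuc', hsingle]
      have h1 : env (Xs *ᵥ v' j₀)^2 = (m:ℝ) * (vV ⬝ᵥ v' j₀)^2 := by
        rw [sq_env, hdot]
      have h2 : (vV ⬝ᵥ v' j₀)^2 ≤ (n:ℝ) := by
        calc (vV ⬝ᵥ v' j₀)^2 ≤ ∑ j, (vV ⬝ᵥ v' j)^2 :=
              Finset.single_le_sum (f := fun j => (vV ⬝ᵥ v' j)^2)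
                (fun j _ => sq_nonneg _) (Finset.mem_univ j₀)
          _ = vV ⬝ᵥ vV := parseval v' hv3' vV
          _ = (n:ℝ) := hvv
      nlinarith [env_nonneg (Xs *ᵥ v' j₀)]
  -- conclude
  by_cases hstrict : s < nuclearNorm X
  · exact lt_of_le_of_lt hnucXs hstrict
  exfalso
  have hEqual : nuclearNorm X = s := le_antisymm (not_lt.1 hstrict) hnucge
  have hTeq : ∀ j, (D *ᵥ v j) ⬝ᵥ (X *ᵥ v j) = env (X *ᵥ v j) := by
    by_contra hcon; push_neg at hcon; obtain ⟨j₁, hj₁⟩ := hcon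
    have hlt : (D *ᵥ v j₁) ⬝ᵥ (X *ᵥ v j₁) < env (X *ᵥ v j₁) :=
      lt_of_le_of_ne (hTle j₁) hj₁
    have hsl : ∑ j, (D *ᵥ v j) ⬝ᵥ (X *ᵥ v j) < ∑ j, env (X *ᵥ v j) :=
      Finset.sum_lt_sum (fun j _ => hTle j) ⟨j₁, Finset.mem_univ j₁, hlt⟩
    rw [← hnuc, hEqual, hSumT] at hsl
    linarith
  have hSumTs : ∑ j, (D *ᵥ v j) ⬝ᵥ (X *ᵥ v j) = s := by
    rw [Finset.sum_congr rfl (fun j _ => hTeq j), ← hnuc, hEqual]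
  have hSumX : ∑ i, ∑ k, X i k = (m:ℝ)*n := by
    have h1 : μ * (∑ i, ∑ k, X i k) = s := by rw [← hSumT]; exact hSumTs
    exact mul_left_cancel₀ (ne_of_gt hμpos) (h1.trans hμmn.symm)
  by_cases hall : ∀ j, X *ᵥ v j = 0
  · have hX0 : X = 0 := by
      ext i k
      rw [reconstruction X v hv3 i k]
      simp [hall]
    rw [hX0] at hSumX
    simp only [Matrix.zero_apply, Finset.sum_const_zero] at hSumX
    linarith
  push_neg at hall; obtain ⟨j₀, hj₀⟩ := hall
  obtain ⟨σ, hσdef⟩ : ∃ σ : ℝ, env (X *ᵥ v j₀) = σ := ⟨_, rfl⟩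
  have hσpos : 0 < σ := by
    rcases (env_nonneg (X *ᵥ v j₀)).lt_or_eq with h | h
    · rw [hσdef] at h; exact h
    · exfalso
      apply hj₀
      apply dot_self_eq_zero
      rw [← sq_env, ← h]
      norm_num
  have hDj₀ : 1 ≤ env (D *ᵥ v j₀) := by
    have h1 := hTeq j₀
    have h2 := dot_le_env_mul_env (D *ᵥ v j₀) (X *ᵥ v j₀)
    rw [h1, hσdef] at h2
    nlinarith
  obtain ⟨c, hvc, hcn, hDvc⟩ := (hcert (v j₀) (hunit j₀)).2 hDj₀
  have hc0 : c ≠ 0 := by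
    intro h; rw [h] at hcn; norm_num at hcn
  have hothers : ∀ j, j ≠ j₀ → X *ᵥ v j = 0 := by
    intro j hjne
    by_contra hj
    have hσj : 0 < env (X *ᵥ v j) := by
      rcases (env_nonneg (X *ᵥ v j)).lt_or_eq with h | h
      · exact h
      · exfalso; apply hj; apply dot_self_eq_zero; rw [← sq_env, ← h]; norm_num
    have hDj : 1 ≤ env (D *ᵥ v j) := by
      have h1 := hTeq j
      have h2 := dot_le_env_mul_env (D *ᵥ v j) (X *ᵥ v j)
      rw [h1] at h2
      nlinarith
    obtain ⟨c', hvc', hcn', _⟩ := (hcert (v j) (hunit j)).2 hDj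
    have horto : v j ⬝ᵥ v j₀ = 0 := by
      have := hv2 j j₀; rwa [if_neg hjne] at this
    rw [hvc, hvc', smul_dotProduct, dotProduct_smul, hvv] at horto
    have hc'0 : c' ≠ 0 := by intro h; rw [h] at hcn'; norm_num at hcn'
    have : c' * (c * (n:ℝ)) ≠ 0 :=
      mul_ne_zero hc'0 (mul_ne_zero hc0 (ne_of_gt hnR))
    simp only [smul_eq_mul] at horto
    exact this horto
  have hDenv1 : env (D *ᵥ v j₀) = 1 := le_antisymm (hcert (v j₀) (hunit j₀)).1 hDj₀
  have hz : (X *ᵥ v j₀ - σ • (D *ᵥ v j₀)) ⬝ᵥ (X *ᵥ v j₀ - σ • (D *ᵥ v j₀)) = 0 := by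
    have e1 : (X *ᵥ v j₀) ⬝ᵥ (X *ᵥ v j₀) = σ^2 := by rw [← sq_env, hσdef]
    have e2 : (D *ᵥ v j₀) ⬝ᵥ (D *ᵥ v j₀) = 1 := by rw [← sq_env, hDenv1]; norm_num
    have e3 : (D *ᵥ v j₀) ⬝ᵥ (X *ᵥ v j₀) = σ := by rw [hTeq j₀, hσdef]
    have e4 : (X *ᵥ v j₀) ⬝ᵥ (D *ᵥ v j₀) = σ := by rw [dotProduct_comm]; exact e3
    simp only [dotProduct_sub, sub_dotProduct, dotProduct_smul, smul_dotProduct,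
      smul_eq_mul, e1, e2, e3, e4]
    ring
  have hXv : X *ᵥ v j₀ = σ • (D *ᵥ v j₀) := by
    have := dot_self_eq_zero hz
    rwa [sub_eq_zero] at this
  have hXform : ∀ i k, X i k = (σ / s) * (u i * vV k) := by
    intro i k
    rw [reconstruction X v hv3 i k]
    rw [Finset.sum_eq_single j₀
      (fun j _ hjne => by rw [hothers j hjne]; simp)
      (fun h => absurd (Finset.mem_univ _) h)]
    rw [hXv, hDvc, hvc]
    simp only [Pi.smul_apply, smul_eq_mul]
    have hs' : s ≠ 0 := ne_of_gt hs
    field_simp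
    linear_combination (u i * vV k) * hcn
  have hSumXform : ∑ i, ∑ k, X i k = (σ/s) * ((m:ℝ)*n) := by
    have huv : ∑ i, ∑ k, (u i * vV k) = (m:ℝ)*n := by
      rw [← Finset.sum_mul_sum]
      rw [hu, hvV, charVec_sum, charVec_sum, hUm, hVn]
    calc ∑ i, ∑ k, X i k = ∑ i, ∑ k, (σ/s) * (u i * vV k) :=
          Finset.sum_congr rfl (fun i _ => Finset.sum_congr rfl (fun k _ => hXform i k))
      _ = (σ/s) * ∑ i, ∑ k, (u i * vV k) := by
          rw [Finset.mul_sum]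
          exact Finset.sum_congr rfl (fun i _ => (Finset.mul_sum _ _ _).symm)
      _ = (σ/s) * ((m:ℝ)*n) := by rw [huv]
  have hσs : σ = s := by
    rw [hSumXform] at hSumX
    have h1 : σ / s = 1 := by
      have := mul_right_cancel₀ (ne_of_gt hmn) (hSumX.trans (one_mul ((m:ℝ)*n)).symm)
      exact this
    field_simp at h1
    exact h1
  apply hne
  ext i k
  rw [hXform i k, hσs, hXs, vecMulVec_apply]
  field_simp
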